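/- Let s_1 < s_2 < \cdots < s_n be real numbers and let D be a nonnegative integer. Let \lambda be a sign vector of length n (a function from Fin n to {-,0,+}) which is not identically zero. Then there exists a real polynomial f with natDegree f \le D such that sign(f(s_i)) = \lambda_i for all i, if and only if m(\lambda) \le D. -/

import Mathlib

open Finset

/-- `i < j` is an even gap of the sign vector `lam`: the entries at `i` and `j` are
nonzero of opposite sign, all entries strictly between are zero, and the number
`j - i - 1` of entries in between is even. -/
def IsEvenGap {n : ℕ} (lam : Fin n → SignType) (i j : Fin n) : Prop :=
  i < j ∧ lam i ≠ 0 ∧ lam j ≠ 0 ∧ lam i = -lam j ∧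
    (∀ r, i < r → r < j → lam r = 0) ∧ Even ((j : ℕ) - (i : ℕ) - 1)

/-- `i < j` is an odd gap of the sign vector `lam`: the entries at `i` and `j` are
nonzero of the same sign, all entries strictly between are zero, and the number
`j - i - 1` of entries in between is odd. -/
def IsOddGap {n : ℕ} (lam : Fin n → SignType) (i j : Fin n) : Prop :=
  i < j ∧ lam i ≠ 0 ∧ lam j ≠ 0 ∧ lam i = lam j ∧
    (∀ r, i < r → r < j → lam r = 0) ∧ Odd ((j : ℕ) - (i : ℕ) - 1)

instance {n : ℕ} (lam : Fin n → SignType) (i j : Fin n) : Decidable (IsEvenGap lam i j) := by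
  unfold IsEvenGap; infer_instance

instance {n : ℕ} (lam : Fin n → SignType) (i j : Fin n) : Decidable (IsOddGap lam i j) := by
  unfold IsOddGap; infer_instance

/-- `m(λ)`: the number of even gaps, plus the number of odd gaps, plus the number
of zero entries of the sign vector `λ`. -/
def mVal {n : ℕ} (lam : Fin n → SignType) : ℕ :=
  (univ.filter fun p : Fin n × Fin n => IsEvenGap lam p.1 p.2).card +
  (univ.filter fun p : Fin n × Fin n => IsOddGap lam p.1 p.2).card +
  (univ.filter fun i : Fin n => lam i = 0).card

open Polynomial
/-- common part of even/odd gap -/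
def IsGap {n : ℕ} (lam : Fin n → SignType) (i j : Fin n) : Prop :=
  i < j ∧ lam i ≠ 0 ∧ lam j ≠ 0 ∧ (∀ r, i < r → r < j → lam r = 0)

lemma isGap_of_counted {n : ℕ} {lam : Fin n → SignType} {i j : Fin n}
    (h : IsEvenGap lam i j ∨ IsOddGap lam i j) : IsGap lam i j := by
  rcases h with ⟨h1, h2, h3, _, h5, _⟩ | ⟨h1, h2, h3, _, h5, _⟩ <;> exact ⟨h1, h2, h3, h5⟩

lemma sq_eq_one_of_ne_zero (a : SignType) (h : a ≠ 0) : a * a = 1 := by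
  cases a <;> simp_all <;> rfl

lemma counted_prod {n : ℕ} {lam : Fin n → SignType} {i j : Fin n}
    (h : IsEvenGap lam i j ∨ IsOddGap lam i j) :
    lam i * lam j = -(-1) ^ ((j : ℕ) - (i : ℕ) - 1) := by
  rcases h with ⟨h1, h2, h3, h4, h5, h6⟩ | ⟨h1, h2, h3, h4, h5, h6⟩
  · rw [h4, h6.neg_one_pow, neg_mul, sq_eq_one_of_ne_zero _ h3]
  · rw [h4, h6.neg_one_pow, sq_eq_one_of_ne_zero _ h3, neg_neg]

lemma uncounted_prod {n : ℕ} {lam : Fin n → SignType} {i j : Fin n}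
    (hg : IsGap lam i j) (h : ¬(IsEvenGap lam i j ∨ IsOddGap lam i j)) :
    lam i * lam j = (-1) ^ ((j : ℕ) - (i : ℕ) - 1) := by
  push_neg at h
  obtain ⟨h1, h2, h3, h5⟩ := hg
  have heo : lam i = lam j ∨ lam i = -lam j := by
    cases hi : lam i <;> cases hj : lam j <;> simp_all <;> rfl
  rcases heo with h4 | h4
  · have : ¬ Odd ((j : ℕ) - (i : ℕ) - 1) := fun ho => h.2 ⟨h1, h2, h3, h4, h5, ho⟩
    rw [Nat.not_odd_iff_even] at this
    rw [h4, this.neg_one_pow, sq_eq_one_of_ne_zero _ h3]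
  · have : ¬ Even ((j : ℕ) - (i : ℕ) - 1) := fun ho => h.1 ⟨h1, h2, h3, h4, h5, ho⟩
    rw [Nat.not_even_iff_odd] at this
    rw [h4, this.neg_one_pow, neg_mul, sq_eq_one_of_ne_zero _ h3]

lemma gap_left_unique {n : ℕ} {lam : Fin n → SignType} {i i' j : Fin n}
    (h : IsGap lam i j) (h' : IsGap lam i' j) : i = i' := by
  rcases lt_trichotomy i i' with hc | hc | hc
  · exact absurd (h.2.2.2 i' hc h'.1) h'.2.1
  · exact hc
  · exact absurd (h'.2.2.2 i hc h.1) h.2.1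

lemma gap_sep {n : ℕ} {lam : Fin n → SignType} {i j i' j' : Fin n}
    (h : IsGap lam i j) (h' : IsGap lam i' j') (hjj : j < j') : j ≤ i' := by
  by_contra hc
  push_neg at hc
  exact h.2.2.1 (h'.2.2.2 j hc hjj)

lemma not_even_and_odd_gap {n : ℕ} {lam : Fin n → SignType} {i j : Fin n}
    (he : IsEvenGap lam i j) (ho : IsOddGap lam i j) : False :=
  (Nat.not_odd_iff_even.2 he.2.2.2.2.2) ho.2.2.2.2.2

/-- disjointness of counted gaps as intervals of indices -/
lemma gap_pair_cases {n : ℕ} {lam : Fin n → SignType} {p q : Fin n × Fin n}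
    (hp : IsGap lam p.1 p.2) (hq : IsGap lam q.1 q.2) (hpq : p ≠ q) :
    p.2 ≤ q.1 ∨ q.2 ≤ p.1 := by
  rcases lt_trichotomy p.2 q.2 with hc | hc | hc
  · exact Or.inl (gap_sep hp hq hc)
  · exact absurd (Prod.ext (gap_left_unique (hc ▸ hp) hq) hc) hpq
  · exact Or.inr (gap_sep hq hp hc)

lemma card_le_of_subset_multiset {α : Type*} [DecidableEq α] (pts : Finset α) (M : Multiset α)
    (h : ∀ x ∈ pts, x ∈ M) : pts.card ≤ Multiset.card M :=
  (Finset.card_le_card (fun x hx => Multiset.mem_toFinset.2 (h x hx))).trans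
    (Multiset.toFinset_card_le M)

open scoped Classical in
lemma sum_card_filter_le_aux {α ι : Type*} (R : Multiset α) (T : Finset ι) (P : ι → α → Prop)
    (hd : ∀ i ∈ T, ∀ j ∈ T, i ≠ j → ∀ x, ¬(P i x ∧ P j x)) :
    ∑ i ∈ T, Multiset.card (R.filter (P i))
      = Multiset.card (R.filter (fun x => ∃ i ∈ T, P i x)) := by
  induction T using Finset.induction_on with
  | empty =>
    have : Multiset.filter (fun _ : α => False) R = 0 := Multiset.filter_eq_nil.2 (by simp)
    simp [this]
  | @insert a T' ha ih =>
    rw [Finset.sum_insert ha]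
    have hd' : ∀ i ∈ T', ∀ j ∈ T', i ≠ j → ∀ x, ¬(P i x ∧ P j x) := by
      intro i hi j hj
      exact hd i (Finset.mem_insert_of_mem hi) j (Finset.mem_insert_of_mem hj)
    rw [ih hd']
    have key : R.filter (P a) + R.filter (fun x => ∃ i ∈ T', P i x)
        = R.filter (fun x => P a x ∨ ∃ i ∈ T', P i x)
          + R.filter (fun x => P a x ∧ ∃ i ∈ T', P i x) :=
      Multiset.filter_add_filter _ _ R
    have hzero : R.filter (fun x => P a x ∧ ∃ i ∈ T', P i x) = 0 := by
      rw [Multiset.filter_eq_nil]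
      rintro x _ ⟨hpa, i, hi, hpi⟩
      exact hd a (Finset.mem_insert_self a T') i (Finset.mem_insert_of_mem hi)
        (fun he => ha (he ▸ hi)) x ⟨hpa, hpi⟩
    rw [hzero, add_zero] at key
    have := congrArg Multiset.card key
    rw [Multiset.card_add] at this
    rw [this]
    congr 1
    apply Multiset.filter_congr
    intro x _
    simp [Finset.mem_insert, exists_or]

lemma multiset_filter_irrel {α : Type*} (p : α → Prop) (h1 h2 : DecidablePred p)
    (R : Multiset α) : @Multiset.filter α p h1 R = @Multiset.filter α p h2 R := by
  rw [Subsingleton.elim h1 h2]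

lemma sum_card_filter_le {α ι : Type*} (R : Multiset α) (T : Finset ι) (P : ι → α → Prop)
    [∀ i, DecidablePred (P i)] [DecidablePred (fun x => ∃ i ∈ T, P i x)]
    (hd : ∀ i ∈ T, ∀ j ∈ T, i ≠ j → ∀ x, ¬(P i x ∧ P j x)) :
    ∑ i ∈ T, Multiset.card (R.filter (P i))
      = Multiset.card (R.filter (fun x => ∃ i ∈ T, P i x)) := by
  have h := sum_card_filter_le_aux R T P hd
  refine (Finset.sum_congr rfl fun p _ =>
    congrArg Multiset.card (multiset_filter_irrel _ _ _ _)).trans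
    (h.trans (congrArg Multiset.card (multiset_filter_irrel _ _ _ _)))

/-- product over a multiset of ±1 signs depending on predicate. -/
lemma prod_map_ite_sign (P : ℝ → Prop) [DecidablePred P] (m : Multiset ℝ) :
    (m.map (fun r => if P r then (-1 : SignType) else 1)).prod
      = (-1) ^ (m.filter P).card := by
  induction m using Multiset.induction_on with
  | empty => simp
  | cons a t ih =>
    by_cases h : P a <;>
      simp [Multiset.filter_cons, h, ih, pow_succ, mul_comm]

lemma sign_multiset_prod (m : Multiset ℝ) :
    SignType.sign m.prod = (m.map SignType.sign).prod := by
  induction m using Multiset.induction_on with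
  | empty => simp
  | cons a t ih => simp [sign_mul, ih]

lemma sign_parity (f : Polynomial ℝ) (a b : ℝ) (hab : a < b)
    (ha : f.eval a ≠ 0) (hb : f.eval b ≠ 0) :
    SignType.sign (f.eval a * f.eval b)
      = (-1) ^ (f.roots.filter (fun x => a < x ∧ x < b)).card := by
  classical
  have hf : f ≠ 0 := by rintro rfl; simp at ha
  obtain ⟨g, hfe, -, hg0⟩ := f.exists_prod_multiset_X_sub_C_mul
  have hgne : ∀ x : ℝ, g.eval x ≠ 0 := by
    intro x hx
    have hgz : g ≠ 0 := by
      rintro rfl; rw [mul_zero] at hfe; exact hf hfe.symm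
    have : x ∈ g.roots := (Polynomial.mem_roots hgz).2 hx
    simp [hg0] at this
  -- g has constant sign
  have hgsign : 0 < g.eval a * g.eval b := by
    rcases lt_trichotomy (g.eval a * g.eval b) 0 with h | h | h
    · exfalso
      -- intermediate value
      have hc : ContinuousOn (fun x => g.eval x) (Set.Icc a b) :=
        (Polynomial.continuous g).continuousOn
      rcases mul_neg_iff.1 h with ⟨hpa, hpb⟩ | ⟨hpa, hpb⟩
      · obtain ⟨x, hx, hx0⟩ := intermediate_value_Ioo' hab.le hc
          (Set.mem_Ioo.2 ⟨hpb, hpa⟩ : (0:ℝ) ∈ Set.Ioo (g.eval b) (g.eval a))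
        exact hgne x hx0
      · obtain ⟨x, hx, hx0⟩ := intermediate_value_Ioo hab.le hc
          (Set.mem_Ioo.2 ⟨hpa, hpb⟩ : (0:ℝ) ∈ Set.Ioo (g.eval a) (g.eval b))
        exact hgne x hx0
    · exact absurd (mul_eq_zero.1 h) (by push_neg; exact ⟨hgne a, hgne b⟩)
    · exact h
  have eval_eq : ∀ x : ℝ, f.eval x = (f.roots.map (fun r => x - r)).prod * g.eval x := by
    intro x
    conv_lhs => rw [← hfe]
    rw [eval_mul]
    congr 1
    rw [eval_multiset_prod, Multiset.map_map]
    congr 1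
    ext r
    simp
  have hroot_mem : ∀ r ∈ f.roots, r ≠ a ∧ r ≠ b := by
    intro r hr
    have := Polynomial.isRoot_of_mem_roots hr
    constructor <;> rintro rfl <;> [exact ha this; exact hb this]
  rw [eval_eq a, eval_eq b]
  have : ((f.roots.map fun r => a - r).prod * g.eval a) *
      ((f.roots.map fun r => b - r).prod * g.eval b)
      = ((f.roots.map fun r => (a - r) * (b - r)).prod) * (g.eval a * g.eval b) := by
    rw [Multiset.prod_map_mul]; ring
  rw [this, sign_mul, sign_pos hgsign, mul_one]
  have : SignType.sign (f.roots.map fun r => (a - r) * (b - r)).prod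
      = ((f.roots.map fun r => (a - r) * (b - r)).map SignType.sign).prod :=
    sign_multiset_prod _
  rw [this, Multiset.map_map]
  have hcongr : ∀ r ∈ f.roots,
      (SignType.sign ∘ fun r => (a - r) * (b - r)) r
        = if (a < r ∧ r < b) then (-1 : SignType) else 1 := by
    intro r hr
    obtain ⟨hra, hrb⟩ := hroot_mem r hr
    by_cases h : a < r ∧ r < b
    · simp only [if_pos h, Function.comp]
      apply sign_neg
      exact mul_neg_of_neg_of_pos (by linarith [h.1]) (by linarith [h.2])
    · simp only [if_neg h, Function.comp]
      apply sign_pos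
      rcases (not_and_or.1 h) with h1 | h2
      · have hra' : r < a := lt_of_le_of_ne (not_lt.1 h1) hra
        exact mul_pos (by linarith) (by linarith)
      · have hrb' : b < r := lt_of_le_of_ne (not_lt.1 h2) hrb.symm
        exact mul_pos_of_neg_of_neg (by linarith) (by linarith)
  rw [Multiset.map_congr rfl hcongr, prod_map_ite_sign]

lemma mVal_eq {n : ℕ} (lam : Fin n → SignType) :
    mVal lam = (univ.filter fun p : Fin n × Fin n =>
        IsEvenGap lam p.1 p.2 ∨ IsOddGap lam p.1 p.2).card +
      (univ.filter fun i : Fin n => lam i = 0).card := by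
  unfold mVal
  congr 1
  rw [Finset.filter_or, Finset.card_union_of_disjoint]
  rw [Finset.disjoint_left]
  intro p hp hq
  exact not_even_and_odd_gap (Finset.mem_filter.1 hp).2 (Finset.mem_filter.1 hq).2

set_option maxHeartbeats 1000000 in
lemma forward_bound {n : ℕ} (s : Fin n → ℝ) (hs : StrictMono s)
    (lam : Fin n → SignType) (f : Polynomial ℝ)
    (hsign : ∀ i, SignType.sign (f.eval (s i)) = lam i) (hlam : lam ≠ 0) :
    mVal lam ≤ Multiset.card f.roots := by
  obtain ⟨m₀, hm₀⟩ : ∃ m, lam m ≠ 0 := by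
    by_contra h; push_neg at h; exact hlam (funext fun i => h i)
  have hfne : ∀ i, lam i ≠ 0 → f.eval (s i) ≠ 0 := fun i hi he =>
    hi (by rw [← hsign i, he, sign_zero])
  have hf : f ≠ 0 := fun h => hfne m₀ hm₀ (by rw [h]; simp)
  have hroot : ∀ i, lam i = 0 → s i ∈ f.roots := fun i hi =>
    (Polynomial.mem_roots hf).2 (by
      rw [Polynomial.IsRoot, ← sign_eq_zero_iff, hsign i, hi])
  set G : Finset (Fin n × Fin n) :=
    univ.filter (fun p => IsEvenGap lam p.1 p.2 ∨ IsOddGap lam p.1 p.2) with hGdef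
  set Z : Finset (Fin n) := univ.filter (fun i => lam i = 0) with hZdef
  have hGgap : ∀ p ∈ G, IsGap lam p.1 p.2 := fun p hp =>
    isGap_of_counted (Finset.mem_filter.1 hp).2
  set k : Fin n × Fin n → ℕ := fun p => (p.2 : ℕ) - (p.1 : ℕ) - 1 with hkdef
  set Pred : Fin n × Fin n → ℝ → Prop := fun p x => s p.1 < x ∧ x < s p.2 with hPdef
  -- disjointness of gap intervals
  have hdisj : ∀ p ∈ G, ∀ q ∈ G, p ≠ q → ∀ x, ¬(Pred p x ∧ Pred q x) := by
    rintro p hp q hq hne x ⟨⟨h1, h2⟩, ⟨h3, h4⟩⟩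
    rcases gap_pair_cases (hGgap p hp) (hGgap q hq) hne with h | h
    · have := hs.monotone h; linarith
    · have := hs.monotone h; linarith
  -- count bound per gap
  have hcnt : ∀ p ∈ G, k p + 1 ≤ Multiset.card (f.roots.filter (Pred p)) := by
    intro p hp
    have hgap := hGgap p hp
    have hlt : p.1 < p.2 := hgap.1
    have hsub : ∀ x ∈ (Finset.Ioo p.1 p.2).image s, x ∈ f.roots.filter (Pred p) := by
      intro x hx
      obtain ⟨r, hr, rfl⟩ := Finset.mem_image.1 hx
      rw [Finset.mem_Ioo] at hr
      exact Multiset.mem_filter.2 ⟨hroot r (hgap.2.2.2 r hr.1 hr.2), hs hr.1, hs hr.2⟩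
    have hk : k p ≤ Multiset.card (f.roots.filter (Pred p)) := by
      have := card_le_of_subset_multiset _ _ hsub
      rwa [Finset.card_image_of_injective _ hs.injective, Fin.card_Ioo] at this
    have hpar : SignType.sign (f.eval (s p.1)) * SignType.sign (f.eval (s p.2))
        = (-1) ^ (Multiset.card (f.roots.filter (Pred p))) := by
      rw [← sign_mul]
      exact sign_parity f (s p.1) (s p.2) (hs hlt) (hfne _ hgap.2.1) (hfne _ hgap.2.2.1)
    rw [hsign, hsign, counted_prod (Finset.mem_filter.1 hp).2] at hpar
    have hnepar : Multiset.card (f.roots.filter (Pred p)) ≠ k p := by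
      rintro he
      rw [he] at hpar
      rcases Nat.even_or_odd (k p) with hpar2 | hpar2
      · rw [hpar2.neg_one_pow] at hpar; exact absurd hpar (by decide)
      · rw [hpar2.neg_one_pow] at hpar; exact absurd hpar (by decide)
    omega
  have sumG : ∑ p ∈ G, Multiset.card (f.roots.filter (Pred p))
      = Multiset.card (f.roots.filter (fun x => ∃ p ∈ G, Pred p x)) :=
    sum_card_filter_le f.roots G Pred hdisj
  set Zin : Finset (Fin n) := G.biUnion (fun p => Finset.Ioo p.1 p.2) with hZindef
  set Zout : Finset (Fin n) := Z \ Zin with hZoutdef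
  have hZoutle : Zout.card
      ≤ Multiset.card (f.roots.filter (fun x => ¬ ∃ p ∈ G, Pred p x)) := by
    have hsub : ∀ x ∈ Zout.image s, x ∈ f.roots.filter (fun x => ¬ ∃ p ∈ G, Pred p x) := by
      intro x hx
      obtain ⟨r, hr, rfl⟩ := Finset.mem_image.1 hx
      rw [hZoutdef, Finset.mem_sdiff] at hr
      refine Multiset.mem_filter.2 ⟨hroot r (Finset.mem_filter.1 hr.1).2, ?_⟩
      rintro ⟨p, hp, h1, h2⟩
      exact hr.2 (Finset.mem_biUnion.2 ⟨p, hp,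
        Finset.mem_Ioo.2 ⟨hs.lt_iff_lt.1 h1, hs.lt_iff_lt.1 h2⟩⟩)
    have := card_le_of_subset_multiset _ _ hsub
    rwa [Finset.card_image_of_injective _ hs.injective] at this
  have hZinsub : Zin ⊆ Z := by
    intro r hr
    obtain ⟨p, hp, hr2⟩ := Finset.mem_biUnion.1 hr
    rw [Finset.mem_Ioo] at hr2
    exact Finset.mem_filter.2 ⟨Finset.mem_univ r, (hGgap p hp).2.2.2 r hr2.1 hr2.2⟩
  have hZin : Zin.card = ∑ p ∈ G, k p := by
    rw [hZindef, Finset.card_biUnion]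
    · exact Finset.sum_congr rfl fun p _ => Fin.card_Ioo _ _
    · intro p hp q hq hne
      rw [Function.onFun, Finset.disjoint_left]
      intro r hr1 hr2
      rw [Finset.mem_Ioo] at hr1 hr2
      rcases gap_pair_cases (hGgap p hp) (hGgap q hq) hne with h | h
      · exact absurd ((hr1.2.trans_le h).trans hr2.1) (lt_irrefl r)
      · exact absurd ((hr2.2.trans_le h).trans hr1.1) (lt_irrefl r)
  have hZcard : Z.card = ∑ p ∈ G, k p + Zout.card := by
    rw [← hZin, hZoutdef]
    have := Finset.card_sdiff_add_card_eq_card hZinsub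
    omega
  have hsplit : Multiset.card (f.roots.filter (fun x => ∃ p ∈ G, Pred p x))
      + Multiset.card (f.roots.filter (fun x => ¬ ∃ p ∈ G, Pred p x))
      = Multiset.card f.roots := by
    rw [← Multiset.card_add, Multiset.filter_add_not]
  have hmval : mVal lam = G.card + Z.card := mVal_eq lam
  calc mVal lam = G.card + Z.card := hmval
    _ = ∑ p ∈ G, (k p + 1) + Zout.card := by
        rw [hZcard, Finset.sum_add_distrib, Finset.sum_const, smul_eq_mul, mul_one]; ring
    _ ≤ ∑ p ∈ G, Multiset.card (f.roots.filter (Pred p)) + Zout.card := by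
        exact Nat.add_le_add_right (Finset.sum_le_sum hcnt) _
    _ ≤ Multiset.card (f.roots.filter (fun x => ∃ p ∈ G, Pred p x))
        + Multiset.card (f.roots.filter (fun x => ¬ ∃ p ∈ G, Pred p x)) := by
        rw [sumG]; exact Nat.add_le_add_left hZoutle _
    _ = Multiset.card f.roots := hsplit

lemma sign_signtype_coe (a : SignType) : SignType.sign ((a : ℝ)) = a := by
  cases a <;> simp

lemma prod_ite_neg_one {ι : Type*} (T : Finset ι) (P : ι → Prop) [DecidablePred P] :
    (∏ i ∈ T, if P i then (-1 : SignType) else 1) = (-1) ^ (T.filter P).card := by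
  rw [Finset.prod_ite, Finset.prod_const, Finset.prod_const, one_pow, mul_one]

section Construct

variable {n : ℕ} (lam : Fin n → SignType)

def gapSet : Finset (Fin n × Fin n) :=
  univ.filter (fun p => IsEvenGap lam p.1 p.2 ∨ IsOddGap lam p.1 p.2)

def zeroSet : Finset (Fin n) := univ.filter (fun i => lam i = 0)

def Nfun (m : Fin n) : ℕ :=
  ((zeroSet lam).filter (fun i => m < i)).card +
    ((gapSet lam).filter (fun p => m < p.2)).card

variable {lam}

lemma gapSet_gap {p : Fin n × Fin n} (hp : p ∈ gapSet lam) : IsGap lam p.1 p.2 :=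
  isGap_of_counted (Finset.mem_filter.1 hp).2

lemma N_gap_step {m j : Fin n} (hgap : IsGap lam m j) :
    Nfun lam m = Nfun lam j + ((j : ℕ) - (m : ℕ) - 1)
      + (if (m, j) ∈ gapSet lam then 1 else 0) := by
  classical
  obtain ⟨hmj, hm, hj, hint⟩ := hgap
  have hzero : (zeroSet lam).filter (fun i => m < i)
      = (zeroSet lam).filter (fun i => j < i) ∪ Finset.Ioo m j := by
    ext i
    simp only [Finset.mem_filter, Finset.mem_union, Finset.mem_Ioo, zeroSet,
      Finset.mem_univ, true_and]
    constructor
    · rintro ⟨hiz, hmi⟩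
      rcases lt_trichotomy i j with h | h | h
      · exact Or.inr ⟨hmi, h⟩
      · exact absurd (h ▸ hiz) hj
      · exact Or.inl ⟨hiz, h⟩
    · rintro (⟨hiz, hji⟩ | ⟨hmi, hij⟩)
      · exact ⟨hiz, hmj.trans hji⟩
      · exact ⟨hint i hmi hij, hmi⟩
  have hdisj : Disjoint ((zeroSet lam).filter (fun i => j < i)) (Finset.Ioo m j) := by
    rw [Finset.disjoint_left]
    intro i h1 h2
    rw [Finset.mem_filter] at h1
    rw [Finset.mem_Ioo] at h2
    exact absurd (h1.2.trans h2.2) (lt_irrefl j)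
  have hgapf : (gapSet lam).filter (fun p => m < p.2)
      = (gapSet lam).filter (fun p => j < p.2) ∪ (gapSet lam).filter (fun p => p = (m, j)) := by
    ext p
    simp only [Finset.mem_filter, Finset.mem_union]
    constructor
    · rintro ⟨hp, hmp⟩
      rcases lt_trichotomy j p.2 with h | h | h
      · exact Or.inl ⟨hp, h⟩
      · have hgp := gapSet_gap hp
        have : p.1 = m := gap_left_unique (h ▸ hgp) ⟨hmj, hm, hj, hint⟩
        exact Or.inr ⟨hp, Prod.ext this h.symm⟩
      · -- m < p.2 < j : p.2 is interior, but lam p.2 ≠ 0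
        exact absurd (hint p.2 hmp h) (gapSet_gap hp).2.2.1
    · rintro (⟨hp, hjp⟩ | ⟨hp, rfl⟩)
      · exact ⟨hp, hmj.trans hjp⟩
      · exact ⟨hp, hmj⟩
  have hdisj2 : Disjoint ((gapSet lam).filter (fun p => j < p.2))
      ((gapSet lam).filter (fun p => p = (m, j))) := by
    rw [Finset.disjoint_left]
    rintro p h1 h2
    rw [Finset.mem_filter] at h1 h2
    rw [h2.2] at h1
    exact absurd h1.2 (lt_irrefl j)
  have hcardeq : ((gapSet lam).filter (fun p => p = (m, j))).card
      = if (m, j) ∈ gapSet lam then 1 else 0 := by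
    rw [Finset.filter_eq']
    split <;> simp
  rw [Nfun, Nfun, hzero, hgapf, Finset.card_union_of_disjoint hdisj,
    Finset.card_union_of_disjoint hdisj2, Fin.card_Ioo, hcardeq]
  ring

lemma lam_gap_step {m j : Fin n} (hgap : IsGap lam m j) :
    lam m = lam j * (-1) ^ (((j : ℕ) - (m : ℕ) - 1)
      + (if (m, j) ∈ gapSet lam then 1 else 0)) := by
  classical
  have hsq : lam m = (lam m * lam j) * lam j := by
    rw [mul_assoc, sq_eq_one_of_ne_zero _ hgap.2.2.1, mul_one]
  by_cases hc : (m, j) ∈ gapSet lam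
  · rw [if_pos hc]
    have h2 := counted_prod (Finset.mem_filter.1 hc).2
    rw [hsq, h2, pow_succ, ← mul_assoc, mul_comm (lam j) ((-1) ^ ((j:ℕ) - m - 1)), neg_mul,
      mul_neg_one]
  · rw [if_neg hc]
    have h2 := uncounted_prod hgap (fun h => hc (Finset.mem_filter.2 ⟨Finset.mem_univ _, h⟩))
    rw [hsq, h2, Nat.add_zero, mul_comm]

lemma eps_gap_step {m j : Fin n} (hgap : IsGap lam m j) :
    lam m * (-1) ^ (Nfun lam m) = lam j * (-1) ^ (Nfun lam j) := by
  classical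
  set c : ℕ := if (m, j) ∈ gapSet lam then 1 else 0 with hcdef
  set k : ℕ := (j : ℕ) - (m : ℕ) - 1 with hkdef
  have hN : Nfun lam m = Nfun lam j + (k + c) := by
    rw [N_gap_step hgap, add_assoc]
  have hl : lam m = lam j * (-1) ^ (k + c) := lam_gap_step hgap
  rcases Nat.even_or_odd (k + c) with hpar | hpar
  · rw [hl, hpar.neg_one_pow, mul_one, hN, pow_add, hpar.neg_one_pow, mul_one]
  · rw [hl, hpar.neg_one_pow, mul_neg_one, hN, pow_add, hpar.neg_one_pow, mul_neg_one,
      neg_mul_neg]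

lemma eps_const {m m' : Fin n} (hm : lam m ≠ 0) (hm' : lam m' ≠ 0) (hle : m ≤ m') :
    lam m * (-1) ^ (Nfun lam m) = lam m' * (-1) ^ (Nfun lam m') := by
  classical
  obtain ⟨d, hd⟩ : ∃ d, (m' : ℕ) - (m : ℕ) = d := ⟨_, rfl⟩
  induction d using Nat.strong_induction_on generalizing m m' with
  | _ d ih =>
    rcases eq_or_lt_of_le hle with rfl | hlt
    · rfl
    · set S : Finset (Fin n) := univ.filter (fun r => m < r ∧ lam r ≠ 0) with hSdef
      have hSne : S.Nonempty :=
        ⟨m', Finset.mem_filter.2 ⟨Finset.mem_univ _, hlt, hm'⟩⟩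
      set j := S.min' hSne with hjdef
      have hj : m < j ∧ lam j ≠ 0 := (Finset.mem_filter.1 (S.min'_mem hSne)).2
      have hgap : IsGap lam m j := by
        refine ⟨hj.1, hm, hj.2, fun r h1 h2 => ?_⟩
        by_contra hr
        exact absurd (S.min'_le r (Finset.mem_filter.2 ⟨Finset.mem_univ _, h1, hr⟩))
          (not_le.2 h2)
      have hjm' : j ≤ m' := S.min'_le m' (Finset.mem_filter.2 ⟨Finset.mem_univ _, hlt, hm'⟩)
      have e1 := eps_gap_step hgap
      have e2 : lam j * (-1) ^ (Nfun lam j) = lam m' * (-1) ^ (Nfun lam m') := by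
        refine ih ((m' : ℕ) - (j : ℕ)) ?_ hj.2 hm' hjm' rfl
        have h1 : (m : ℕ) < (j : ℕ) := hj.1
        have h2 : (j : ℕ) ≤ (m' : ℕ) := hjm'
        omega
      exact e1.trans e2
end Construct

lemma sign_finset_prod {ι : Type*} (T : Finset ι) (g : ι → ℝ) :
    SignType.sign (∏ i ∈ T, g i) = ∏ i ∈ T, SignType.sign (g i) := by
  classical
  induction T using Finset.cons_induction with
  | empty => simp
  | cons a T ha ih => rw [Finset.prod_cons, Finset.prod_cons, sign_mul, ih]

lemma signtype_coe_ne_zero {a : SignType} (h : a ≠ 0) : (a : ℝ) ≠ 0 := by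
  cases a <;> simp_all

def predIdx {n : ℕ} (p : Fin n × Fin n) : Fin n :=
  ⟨p.2.1 - 1, Nat.lt_of_le_of_lt (Nat.sub_le _ _) p.2.2⟩

lemma construct {n : ℕ} (s : Fin n → ℝ) (hs : StrictMono s)
    (lam : Fin n → SignType) (hlam : lam ≠ 0) :
    ∃ f : Polynomial ℝ, f.natDegree = mVal lam ∧
      ∀ i, SignType.sign (f.eval (s i)) = lam i := by
  classical
  obtain ⟨m₀, hm₀⟩ : ∃ m, lam m ≠ 0 := by
    by_contra h; push_neg at h; exact hlam (funext fun i => h i)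
  set G : Finset (Fin n × Fin n) := gapSet lam with hGdef
  set Z : Finset (Fin n) := zeroSet lam with hZdef
  set tp : Fin n × Fin n → ℝ := fun p => (s (predIdx p) + s p.2) / 2 with htpdef
  have hpredlt : ∀ p ∈ G, predIdx p < p.2 := by
    intro p hp
    have h1 : p.1 < p.2 := (gapSet_gap hp).1
    rw [Fin.lt_def]
    have : (p.1 : ℕ) < (p.2 : ℕ) := h1
    simp only [predIdx]
    omega
  have htlt : ∀ p ∈ G, tp p < s p.2 := by
    intro p hp
    have := hs (hpredlt p hp)
    simp only [htpdef]
    linarith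
  have htgt : ∀ p ∈ G, ∀ m : Fin n, m < p.2 → s m < tp p := by
    intro p hp m hm
    have hm' : m ≤ predIdx p := by
      rw [Fin.le_def]
      have h2 : (m : ℕ) < (p.2 : ℕ) := hm
      simp only [predIdx]
      omega
    have h2 := hs.monotone hm'
    have h3 := hs (hpredlt p hp)
    simp only [htpdef]
    linarith
  set u : SignType := lam m₀ * (-1) ^ (Nfun lam m₀) with hudef
  have hu : u ≠ 0 := mul_ne_zero hm₀ (pow_ne_zero _ (by decide))
  set c : ℝ := (u : ℝ) with hcdef
  have hc0 : c ≠ 0 := signtype_coe_ne_zero hu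
  set f : Polynomial ℝ :=
    Polynomial.C c * ((∏ i ∈ Z, (Polynomial.X - Polynomial.C (s i))) *
      (∏ p ∈ G, (Polynomial.X - Polynomial.C (tp p)))) with hfdef
  have hZm : (∏ i ∈ Z, (Polynomial.X - Polynomial.C (s i))).Monic :=
    monic_prod_of_monic _ _ fun i _ => monic_X_sub_C _
  have hGm : (∏ p ∈ G, (Polynomial.X - Polynomial.C (tp p))).Monic :=
    monic_prod_of_monic _ _ fun p _ => monic_X_sub_C _
  refine ⟨f, ?_, ?_⟩
  · rw [hfdef, natDegree_C_mul hc0, natDegree_mul hZm.ne_zero hGm.ne_zero,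
      natDegree_prod _ _ (fun i _ => X_sub_C_ne_zero (s i)),
      natDegree_prod _ _ (fun p _ => X_sub_C_ne_zero (tp p))]
    simp only [natDegree_X_sub_C, Finset.sum_const, smul_eq_mul, mul_one]
    rw [mVal_eq]
    rw [add_comm]
    rfl
  · intro m
    have hev : f.eval (s m) = c * ((∏ i ∈ Z, (s m - s i)) * (∏ p ∈ G, (s m - tp p))) := by
      simp [hfdef, eval_prod]
    by_cases hz : lam m = 0
    · have hmem : m ∈ Z := by simp [hZdef, zeroSet, hz]
      have hA : (∏ i ∈ Z, (s m - s i)) = 0 := Finset.prod_eq_zero hmem (sub_self _)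
      rw [hev, hA, zero_mul, mul_zero, sign_zero, hz]
    · rw [hev, sign_mul, sign_mul, sign_finset_prod, sign_finset_prod]
      have hZsign : (∏ i ∈ Z, SignType.sign (s m - s i))
          = (-1) ^ ((Z.filter (fun i => m < i)).card) := by
        rw [← prod_ite_neg_one Z (fun i => m < i)]
        refine Finset.prod_congr rfl fun i hi => ?_
        have hiz : lam i = 0 := by
          rw [hZdef, zeroSet, Finset.mem_filter] at hi; exact hi.2
        have hne : i ≠ m := fun h => hz (h ▸ hiz)
        by_cases hlt : m < i
        · rw [if_pos hlt]
          exact sign_neg (by linarith [hs hlt])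
        · rw [if_neg hlt]
          have : i < m := lt_of_le_of_ne (not_lt.1 hlt) hne
          exact sign_pos (by linarith [hs this])
      have hGsign : (∏ p ∈ G, SignType.sign (s m - tp p))
          = (-1) ^ ((G.filter (fun p => m < p.2)).card) := by
        rw [← prod_ite_neg_one G (fun p => m < p.2)]
        refine Finset.prod_congr rfl fun p hp => ?_
        by_cases hlt : m < p.2
        · rw [if_pos hlt]
          exact sign_neg (by linarith [htgt p hp m hlt])
        · rw [if_neg hlt]
          have h1 : s p.2 ≤ s m := hs.monotone (not_lt.1 hlt)
          exact sign_pos (by linarith [htlt p hp])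
      rw [hZsign, hGsign, hcdef, sign_signtype_coe, hudef]
      have heps : lam m₀ * (-1) ^ (Nfun lam m₀) = lam m * (-1) ^ (Nfun lam m) := by
        rcases le_total m₀ m with hle | hle
        · exact eps_const hm₀ hz hle
        · exact (eps_const hz hm₀ hle).symm
      rw [heps]
      have hNm : (Z.filter (fun i => m < i)).card + (G.filter (fun p => m < p.2)).card
          = Nfun lam m := rfl
      rw [mul_assoc, ← pow_add, hNm, ← pow_add]
      have : Even (Nfun lam m + Nfun lam m) := ⟨Nfun lam m, rfl⟩
      rw [this.neg_one_pow, mul_one]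

theorem exists_poly_sign_iff {n : ℕ} (s : Fin n → ℝ) (hs : StrictMono s) (D : ℕ)
    (lam : Fin n → SignType) (hlam : lam ≠ 0) :
    (∃ f : Polynomial ℝ, f.natDegree ≤ D ∧
        ∀ i, SignType.sign (f.eval (s i)) = lam i) ↔ mVal lam ≤ D := by
  constructor
  · rintro ⟨f, hdeg, hsign⟩
    exact (forward_bound s hs lam f hsign hlam).trans
      ((Polynomial.card_roots' f).trans hdeg)
  · intro h
    obtain ⟨f, hd, hsgn⟩ := construct s hs lam hlam
    exact ⟨f, hd ▸ h, hsgn⟩
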